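/- The function I_δ(θ, r) = cos(πr) + δ cos(π(2θ - r)) is invariant under the Suris standard map f_δ(θ, r) = (θ + r + V'_δ(θ), r + V'_δ(θ)), where V'_δ(θ) = -(2/π) arctan( δ sin(2πθ) / (1 + δ cos(2πθ)) ) and 0 < δ < 1; i.e., I_δ ∘ f_δ = I_δ. -/

import Mathlib

open Real

noncomputable def Vd' (δ θ : ℝ) : ℝ :=
  -(2 / π) * arctan (δ * sin (2 * π * θ) / (1 + δ * cos (2 * π * θ)))

noncomputable def suris (δ : ℝ) (p : ℝ × ℝ) : ℝ × ℝ :=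
  (p.1 + p.2 + Vd' δ p.1, p.2 + Vd' δ p.1)

noncomputable def I (δ : ℝ) (p : ℝ × ℝ) : ℝ :=
  cos (π * p.2) + δ * cos (π * (2 * p.1 - p.2))

theorem suris_integrable (δ : ℝ) (hδ : 0 < δ) (hδ1 : δ < 1) :
    I δ ∘ suris δ = I δ := by
  funext p
  obtain ⟨θ, r⟩ := p
  simp only [Function.comp_apply, suris, I, Vd']
  have hπ : (π:ℝ) ≠ 0 := pi_ne_zero
  set t := 2 * π * θ with ht
  set s := sin t with hs
  set c := cos t with hc
  have hsc : s ^ 2 + c ^ 2 = 1 := sin_sq_add_cos_sq t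
  have hD : (0:ℝ) < 1 + δ * c := by nlinarith [neg_one_le_cos t, cos_le_one t]
  set y := δ * s / (1 + δ * c) with hy
  set a := arctan y with ha
  have h1 : π * (r + -(2/π) * a) = π * r - 2 * a := by field_simp; ring
  have h2 : π * (2 * (θ + r + -(2/π) * a) - (r + -(2/π) * a)) = t + π * r - 2 * a := by
    rw [ht]; field_simp; ring
  have h3 : π * (2 * θ - r) = t - π * r := by rw [ht]; ring
  rw [h1, h2, h3]
  have hy2 : (0:ℝ) < 1 + y ^ 2 := by positivity
  have hcos2 : cos (2 * a) = (1 - y ^ 2) / (1 + y ^ 2) := by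
    rw [cos_two_mul, ha, cos_sq_arctan]
    field_simp
    ring
  have hsin2 : sin (2 * a) = 2 * y / (1 + y ^ 2) := by
    rw [sin_two_mul, ha, sin_arctan, cos_arctan]
    have hmul : √(1 + y ^ 2) * √(1 + y ^ 2) = 1 + y ^ 2 := Real.mul_self_sqrt hy2.le
    have hsq : √(1 + y ^ 2) ≠ 0 := by positivity
    field_simp
    rw [Real.sq_sqrt hy2.le]
  have e1 : cos (π * r - 2 * a) = cos (π * r) * cos (2 * a) + sin (π * r) * sin (2 * a) :=
    cos_sub _ _
  have e2 : cos (t + π * r - 2 * a)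
      = (c * cos (π * r) - s * sin (π * r)) * cos (2 * a)
        + (s * cos (π * r) + c * sin (π * r)) * sin (2 * a) := by
    rw [cos_sub, cos_add, sin_add]
  have e3 : cos (t - π * r) = c * cos (π * r) + s * sin (π * r) := by
    rw [cos_sub]
  rw [e1, e2, e3, hcos2, hsin2, hy]
  have hD' : (1 + δ * c) ≠ 0 := ne_of_gt hD
  field_simp
  ring_nf
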